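/- Let (X,Σ,μ) be an arbitrary measure space and 1 < p ≤ 2. Then for every x, y ∈ L_p(X,Σ,μ) we have ‖x‖_{L_p}^2 + (p−1)‖y‖_{L_p}^2 ≤ (‖x+y‖_{L_p}^2 + ‖x−y‖_{L_p}^2)/2. -/

import Mathlib

open MeasureTheory

section BCLAux
open Real Set
variable {p : ℝ} (hp : 1 < p) (hp2 : p ≤ 2)



include hp in
lemma u_pos {t : ℝ} : (0:ℝ) < 1 + (p - 1) * t ^ 2 := by nlinarith [sq_nonneg t]

include hp in
lemma hasDerivAt_G {t : ℝ} (ht0 : 0 < t) (ht1 : t < 1) :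
    HasDerivAt (fun s : ℝ => ((1 + s) ^ (p - 1) - (1 - s) ^ (p - 1)) / 2
        - (p - 1) * (s * (1 + (p - 1) * s ^ 2) ^ (p / 2 - 1)))
      ((p - 1) * (((1 + t) ^ (p - 2) + (1 - t) ^ (p - 2)) / 2
        - (1 + (p - 1) ^ 2 * t ^ 2) * (1 + (p - 1) * t ^ 2) ^ (p / 2 - 2))) t := by
  have h1 : (0:ℝ) < 1 + t := by linarith
  have h2 : (0:ℝ) < 1 - t := by linarith
  have hu : (0:ℝ) < 1 + (p - 1) * t ^ 2 := u_pos hp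
  have e2 : p - 1 - 1 = p - 2 := by ring
  have d1 : HasDerivAt (fun s : ℝ => (1 + s) ^ (p - 1)) (1 * (p-1) * (1+t) ^ (p-2)) t := by
    have := ((hasDerivAt_id t).const_add 1).rpow_const (p := p - 1) (Or.inl h1.ne')
    rwa [e2] at this
  have d2 : HasDerivAt (fun s : ℝ => (1 - s) ^ (p - 1)) ((-1) * (p-1) * (1-t) ^ (p-2)) t := by
    have := ((hasDerivAt_id t).const_sub 1).rpow_const (p := p - 1) (Or.inl h2.ne')
    rwa [e2] at this
  have du : HasDerivAt (fun s : ℝ => 1 + (p - 1) * s ^ 2) ((p-1) * (2 * t)) t := by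
    have := (((hasDerivAt_id t).pow 2).const_mul (p-1)).const_add 1
    simpa [mul_comm] using this
  have d3 : HasDerivAt (fun s : ℝ => (1 + (p - 1) * s ^ 2) ^ (p / 2 - 1))
      ((p-1) * (2 * t) * (p/2 - 1) * (1 + (p-1) * t^2) ^ (p/2 - 2)) t := by
    have := du.rpow_const (p := p / 2 - 1) (Or.inl hu.ne')
    have e3 : p / 2 - 1 - 1 = p / 2 - 2 := by ring
    rwa [e3] at this
  have d4 : HasDerivAt (fun s : ℝ => (p - 1) * (s * (1 + (p - 1) * s ^ 2) ^ (p / 2 - 1)))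
      ((p-1) * (1 * (1 + (p-1) * t^2) ^ (p/2-1)
        + t * ((p-1) * (2 * t) * (p/2 - 1) * (1 + (p-1) * t^2) ^ (p/2 - 2)))) t := by
    simpa using ((hasDerivAt_id t).mul d3).const_mul (p - 1)
  have dG := ((d1.sub d2).div_const 2).sub d4
  refine dG.congr_deriv ?_
  have e4 : p/2 - 1 = (p/2 - 2) + 1 := by ring
  have key : (1 + (p-1) * t^2) ^ (p/2-1)
      = (1 + (p-1) * t^2) ^ (p/2-2) * (1 + (p-1)*t^2) := by
    rw [e4, Real.rpow_add hu, Real.rpow_one]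
  rw [key]; ring

include hp hp2 in
lemma Gderiv_nonneg {t : ℝ} (ht0 : 0 < t) (ht1 : t < 1) :
    0 ≤ (p - 1) * (((1 + t) ^ (p - 2) + (1 - t) ^ (p - 2)) / 2
        - (1 + (p - 1) ^ 2 * t ^ 2) * (1 + (p - 1) * t ^ 2) ^ (p / 2 - 2)) := by
  have h1 : (0:ℝ) < 1 + t := by linarith
  have h2 : (0:ℝ) < 1 - t := by linarith
  have hu : (0:ℝ) < 1 + (p - 1) * t ^ 2 := u_pos hp
  have hu1 : (1:ℝ) ≤ 1 + (p - 1) * t ^ 2 := by nlinarith [sq_nonneg t]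
  -- left term ≥ 1 by AM-GM
  have hL : (1:ℝ) ≤ ((1 + t) ^ (p - 2) + (1 - t) ^ (p - 2)) / 2 := by
    have hab : (1 + t) ^ (p - 2) * (1 - t) ^ (p - 2) = ((1+t)*(1-t)) ^ (p-2) :=
      (Real.mul_rpow h1.le h2.le).symm
    have hsq : (0:ℝ) < (1+t)*(1-t) := mul_pos h1 h2
    have hone : (1:ℝ) ≤ ((1+t)*(1-t)) ^ (p-2) := by
      apply Real.one_le_rpow_of_pos_of_le_one_of_nonpos hsq (by nlinarith) (by linarith)
    have ha := Real.rpow_nonneg h1.le (p-2)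
    have hb := Real.rpow_nonneg h2.le (p-2)
    nlinarith [sq_nonneg ((1+t)^(p-2) - (1-t)^(p-2))]
  -- right term ≤ 1
  have hR : (1 + (p - 1) ^ 2 * t ^ 2) * (1 + (p - 1) * t ^ 2) ^ (p / 2 - 2) ≤ 1 := by
    have h5 : 1 + (p - 1) ^ 2 * t ^ 2 ≤ 1 + (p - 1) * t ^ 2 := by nlinarith [sq_nonneg t]
    have h6 : (1:ℝ) + (p-1) * t^2 ≤ (1 + (p-1) * t^2) ^ (2 - p/2) := by
      nth_rewrite 1 [← Real.rpow_one (1 + (p-1)*t^2)]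
      exact Real.rpow_le_rpow_of_exponent_le hu1 (by linarith)
    have h7 : (0:ℝ) ≤ (1 + (p-1) * t^2) ^ (p/2 - 2) := Real.rpow_nonneg hu.le _
    calc (1 + (p - 1) ^ 2 * t ^ 2) * (1 + (p - 1) * t ^ 2) ^ (p / 2 - 2)
        ≤ (1 + (p-1) * t^2) ^ (2 - p/2) * (1 + (p - 1) * t ^ 2) ^ (p / 2 - 2) := by
          apply mul_le_mul_of_nonneg_right (le_trans h5 h6) h7
      _ = 1 := by
          rw [← Real.rpow_add hu]; norm_num
  have : 0 < p - 1 := by linarith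
  nlinarith



include hp in
lemma hasDerivAt_F {t : ℝ} (ht0 : 0 < t) (ht1 : t < 1) :
    HasDerivAt (fun s : ℝ => ((1 + s) ^ p + (1 - s) ^ p) / 2
        - (1 + (p - 1) * s ^ 2) ^ (p / 2))
      (p * (((1 + t) ^ (p - 1) - (1 - t) ^ (p - 1)) / 2
        - (p - 1) * (t * (1 + (p - 1) * t ^ 2) ^ (p / 2 - 1)))) t := by
  have h1 : (0:ℝ) < 1 + t := by linarith
  have h2 : (0:ℝ) < 1 - t := by linarith
  have hu : (0:ℝ) < 1 + (p - 1) * t ^ 2 := u_pos hp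
  have d1 : HasDerivAt (fun s : ℝ => (1 + s) ^ p) (1 * p * (1+t) ^ (p-1)) t :=
    ((hasDerivAt_id t).const_add 1).rpow_const (Or.inl h1.ne')
  have d2 : HasDerivAt (fun s : ℝ => (1 - s) ^ p) ((-1) * p * (1-t) ^ (p-1)) t :=
    ((hasDerivAt_id t).const_sub 1).rpow_const (Or.inl h2.ne')
  have du : HasDerivAt (fun s : ℝ => 1 + (p - 1) * s ^ 2) ((p-1) * (2 * t)) t := by
    have := (((hasDerivAt_id t).pow 2).const_mul (p-1)).const_add 1
    simpa [mul_comm] using this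
  have d3 : HasDerivAt (fun s : ℝ => (1 + (p - 1) * s ^ 2) ^ (p / 2))
      ((p-1) * (2 * t) * (p/2) * (1 + (p-1) * t^2) ^ (p/2 - 1)) t :=
    du.rpow_const (Or.inl hu.ne')
  have dF := ((d1.add d2).div_const 2).sub d3
  refine dF.congr_deriv ?_
  ring

include hp in
lemma G_cont : ContinuousOn (fun s : ℝ => ((1 + s) ^ (p - 1) - (1 - s) ^ (p - 1)) / 2
    - (p - 1) * (s * (1 + (p - 1) * s ^ 2) ^ (p / 2 - 1))) (Icc 0 1) := by
  have c1 : ContinuousOn (fun s : ℝ => (1 + s) ^ (p - 1)) (Icc (0:ℝ) 1) := by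
    apply (continuousOn_const.add continuousOn_id).rpow_const
    intro x hx; left; simp only [Set.mem_Icc] at hx; simp only [Pi.add_apply, id_eq]; intro h; linarith [hx.1]
  have c2 : ContinuousOn (fun s : ℝ => (1 - s) ^ (p - 1)) (Icc (0:ℝ) 1) := by
    apply (continuousOn_const.sub continuousOn_id).rpow_const
    intro x hx; right; linarith
  have cu : ContinuousOn (fun s : ℝ => (1 + (p - 1) * s ^ 2) ^ (p / 2 - 1)) (Icc (0:ℝ) 1) := by
    apply ContinuousOn.rpow_const
    · fun_prop
    · intro x hx; left; exact (u_pos hp).ne'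
  exact ((c1.sub c2).div_const 2).sub (continuousOn_const.mul ((continuousOn_id : ContinuousOn id (Icc (0:ℝ) 1)).mul cu))

include hp in
lemma F_cont : ContinuousOn (fun s : ℝ => ((1 + s) ^ p + (1 - s) ^ p) / 2
    - (1 + (p - 1) * s ^ 2) ^ (p / 2)) (Icc 0 1) := by
  have c1 : ContinuousOn (fun s : ℝ => (1 + s) ^ p) (Icc (0:ℝ) 1) := by
    apply (continuousOn_const.add continuousOn_id).rpow_const
    intro x hx; left; simp only [Set.mem_Icc] at hx; simp only [Pi.add_apply, id_eq]; intro h; linarith [hx.1]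
  have c2 : ContinuousOn (fun s : ℝ => (1 - s) ^ p) (Icc (0:ℝ) 1) := by
    apply (continuousOn_const.sub continuousOn_id).rpow_const
    intro x hx; right; linarith
  have cu : ContinuousOn (fun s : ℝ => (1 + (p - 1) * s ^ 2) ^ (p / 2)) (Icc (0:ℝ) 1) := by
    apply ContinuousOn.rpow_const
    · fun_prop
    · intro x hx; left; exact (u_pos hp).ne'
  exact ((c1.add c2).div_const 2).sub cu




include hp hp2 in
lemma G_nonneg {t : ℝ} (ht : t ∈ Icc (0:ℝ) 1) :
    0 ≤ ((1 + t) ^ (p - 1) - (1 - t) ^ (p - 1)) / 2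
      - (p - 1) * (t * (1 + (p - 1) * t ^ 2) ^ (p / 2 - 1)) := by
  set G : ℝ → ℝ := fun s => ((1 + s) ^ (p - 1) - (1 - s) ^ (p - 1)) / 2
      - (p - 1) * (s * (1 + (p - 1) * s ^ 2) ^ (p / 2 - 1)) with hG
  have hmono : MonotoneOn G (Icc 0 1) := by
    apply monotoneOn_of_deriv_nonneg (convex_Icc 0 1) (G_cont hp)
    · rw [interior_Icc]
      intro s hs
      exact (hasDerivAt_G hp hs.1 hs.2).differentiableAt.differentiableWithinAt
    · rw [interior_Icc]
      intro s hs
      rw [(hasDerivAt_G hp hs.1 hs.2).deriv]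
      exact Gderiv_nonneg hp hp2 hs.1 hs.2
  have h0 : G 0 = 0 := by simp [hG]
  have := hmono (left_mem_Icc.2 zero_le_one) ht ht.1
  rw [h0] at this
  exact this

include hp hp2 in
lemma F_nonneg {t : ℝ} (ht : t ∈ Icc (0:ℝ) 1) :
    (1 + (p - 1) * t ^ 2) ^ (p / 2) ≤ ((1 + t) ^ p + (1 - t) ^ p) / 2 := by
  set F : ℝ → ℝ := fun s => ((1 + s) ^ p + (1 - s) ^ p) / 2
      - (1 + (p - 1) * s ^ 2) ^ (p / 2) with hF
  have hmono : MonotoneOn F (Icc 0 1) := by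
    apply monotoneOn_of_deriv_nonneg (convex_Icc 0 1) (F_cont hp)
    · rw [interior_Icc]
      intro s hs
      exact (hasDerivAt_F hp hs.1 hs.2).differentiableAt.differentiableWithinAt
    · rw [interior_Icc]
      intro s hs
      rw [(hasDerivAt_F hp hs.1 hs.2).deriv]
      have := G_nonneg hp hp2 (Ioo_subset_Icc_self hs)
      positivity
  have h0 : F 0 = 0 := by simp [hF]
  have := hmono (left_mem_Icc.2 zero_le_one) ht ht.1
  rw [h0] at this
  simp only [hF, sub_nonneg] at this
  linarith [this]



include hp hp2 in
lemma tp_ordered {a b : ℝ} (hb : 0 ≤ b) (hba : b ≤ a) :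
    (a ^ 2 + (p - 1) * b ^ 2) ^ (p / 2) ≤ ((a + b) ^ p + (a - b) ^ p) / 2 := by
  have ha : 0 ≤ a := le_trans hb hba
  rcases eq_or_lt_of_le ha with h0 | h0
  · have hb0 : b = 0 := le_antisymm (h0 ▸ hba) hb
    rw [← h0, hb0]
    norm_num [Real.zero_rpow (show p/2 ≠ 0 by positivity), Real.zero_rpow (show p ≠ 0 by positivity)]
  · set t := b / a with htdef
    have ht0 : 0 ≤ t := div_nonneg hb ha
    have ht1 : t ≤ 1 := (div_le_one h0).2 hba
    have key := F_nonneg hp hp2 (Set.mem_Icc.2 ⟨ht0, ht1⟩)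
    have hap : 0 ≤ a ^ p := Real.rpow_nonneg ha p
    have e0 : (a:ℝ) ^ p = (a ^ 2 : ℝ) ^ (p / 2) := by
      rw [← Real.rpow_natCast a 2, ← Real.rpow_mul ha]
      congr 1
      ring
    have e1 : (a ^ 2 + (p - 1) * b ^ 2) ^ (p / 2)
        = a ^ p * (1 + (p - 1) * t ^ 2) ^ (p / 2) := by
      have : a ^ 2 + (p - 1) * b ^ 2 = a ^ 2 * (1 + (p - 1) * t ^ 2) := by
        rw [htdef]
        field_simp
      rw [this, Real.mul_rpow (by positivity) (by nlinarith [sq_nonneg t]), e0]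
    have e2 : (a + b) ^ p = a ^ p * (1 + t) ^ p := by
      have : a + b = a * (1 + t) := by rw [htdef]; field_simp
      rw [this, Real.mul_rpow ha (by linarith)]
    have e3 : (a - b) ^ p = a ^ p * (1 - t) ^ p := by
      have : a - b = a * (1 - t) := by rw [htdef]; field_simp
      rw [this, Real.mul_rpow ha (by linarith)]
    rw [e1, e2, e3]
    calc a ^ p * (1 + (p - 1) * t ^ 2) ^ (p / 2)
        ≤ a ^ p * (((1 + t) ^ p + (1 - t) ^ p) / 2) := mul_le_mul_of_nonneg_left key hap
      _ = (a ^ p * (1 + t) ^ p + a ^ p * (1 - t) ^ p) / 2 := by ring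

include hp hp2 in
lemma tp_nonneg {a b : ℝ} (ha : 0 ≤ a) (hb : 0 ≤ b) :
    (a ^ 2 + (p - 1) * b ^ 2) ^ (p / 2) ≤ ((a + b) ^ p + |a - b| ^ p) / 2 := by
  rcases le_total b a with h | h
  · rw [abs_of_nonneg (by linarith)]
    exact tp_ordered hp hp2 hb h
  · rw [abs_of_nonpos (by linarith), neg_sub]
    have h1 : (a ^ 2 + (p - 1) * b ^ 2) ^ (p / 2) ≤ (b ^ 2 + (p - 1) * a ^ 2) ^ (p / 2) := by
      apply Real.rpow_le_rpow (by nlinarith) (by nlinarith [mul_nonneg (sub_nonneg.2 h) (add_nonneg ha hb)]) (by positivity)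
    calc (a ^ 2 + (p - 1) * b ^ 2) ^ (p / 2)
        ≤ (b ^ 2 + (p - 1) * a ^ 2) ^ (p / 2) := h1
      _ ≤ ((b + a) ^ p + (b - a) ^ p) / 2 := tp_ordered hp hp2 ha h
      _ = ((a + b) ^ p + (b - a) ^ p) / 2 := by rw [add_comm b a]

include hp hp2 in
lemma two_point (A B : ℝ) :
    (A ^ 2 + (p - 1) * B ^ 2) ^ (p / 2) ≤ (|A + B| ^ p + |A - B| ^ p) / 2 := by
  have main : ∀ a b : ℝ, 0 ≤ a → 0 ≤ b →
      (a ^ 2 + (p - 1) * b ^ 2) ^ (p / 2) ≤ (|a + b| ^ p + |a - b| ^ p) / 2 := by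
    intro a b ha hb
    rw [abs_of_nonneg (add_nonneg ha hb)]
    exact tp_nonneg hp hp2 ha hb
  have step : ∀ a : ℝ, 0 ≤ a → ∀ b : ℝ,
      (a ^ 2 + (p - 1) * b ^ 2) ^ (p / 2) ≤ (|a + b| ^ p + |a - b| ^ p) / 2 := by
    intro a ha b
    rcases le_total 0 b with hb | hb
    · exact main a b ha hb
    · have := main a (-b) ha (by linarith)
      simp only [neg_neg, even_two, Even.neg_pow, sub_neg_eq_add, ← sub_eq_add_neg] at this
      linarith
  rcases le_total 0 A with hA | hA
  · exact step A hA B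
  · have := step (-A) (by linarith) B
    have e1 : |-A + B| = |A - B| := by rw [← abs_neg]; ring_nf
    have e2 : |-A - B| = |A + B| := by rw [← abs_neg]; ring_nf
    simp only [even_two, Even.neg_pow, e1, e2] at this
    linarith
end BCLAux

section BCLMain
open MeasureTheory ENNReal Set

lemma conc2 {r : ℝ} (hr0 : 0 < r) (hr1 : r ≤ 1) (w₁ w₂ z₁ z₂ : ℝ≥0∞) (hw : w₁ + w₂ = 1) :
    w₁ * z₁ ^ r + w₂ * z₂ ^ r ≤ (w₁ * z₁ + w₂ * z₂) ^ r := by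
  have hq : 1 ≤ 1 / r := by rw [le_div_iff₀ hr0]; linarith
  have h := ENNReal.rpow_arith_mean_le_arith_mean2_rpow w₁ w₂ (z₁ ^ r) (z₂ ^ r) hw hq
  have hz : ∀ z : ℝ≥0∞, (z ^ r) ^ (1/r) = z := by
    intro z
    rw [← ENNReal.rpow_mul, mul_one_div_cancel hr0.ne', ENNReal.rpow_one]
  rw [hz, hz] at h
  have h2 := ENNReal.rpow_le_rpow h hr0.le
  rwa [← ENNReal.rpow_mul, one_div_mul_cancel hr0.ne', ENNReal.rpow_one] at h2

lemma rev_minkowski {X : Type*} {m0 : MeasurableSpace X} {μ : Measure X}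
    {f g : X → ℝ≥0∞} (hf : AEMeasurable f μ) (hg : AEMeasurable g μ)
    {r : ℝ} (hr0 : 0 < r) (hr1 : r ≤ 1) :
    (∫⁻ a, f a ^ r ∂μ) ^ (1/r) + (∫⁻ a, g a ^ r ∂μ) ^ (1/r)
      ≤ (∫⁻ a, (f a + g a) ^ r ∂μ) ^ (1/r) := by
  set A := (∫⁻ a, f a ^ r ∂μ) ^ (1/r) with hA
  set B := (∫⁻ a, g a ^ r ∂μ) ^ (1/r) with hB
  have h1r : (0:ℝ) < 1 / r := by positivity
  have hAle : A ≤ (∫⁻ a, (f a + g a) ^ r ∂μ) ^ (1/r) :=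
    ENNReal.rpow_le_rpow (lintegral_mono fun a => ENNReal.rpow_le_rpow le_self_add hr0.le) h1r.le
  have hBle : B ≤ (∫⁻ a, (f a + g a) ^ r ∂μ) ^ (1/r) :=
    ENNReal.rpow_le_rpow (lintegral_mono fun a => ENNReal.rpow_le_rpow le_add_self hr0.le) h1r.le
  rcases eq_or_ne A 0 with hA0 | hA0
  · simpa [hA0] using hBle
  rcases eq_or_ne B 0 with hB0 | hB0
  · simpa [hB0] using hAle
  rcases eq_or_ne A ⊤ with hAt | hAt
  · have h : (∫⁻ a, (f a + g a) ^ r ∂μ) ^ (1/r) = ⊤ := top_le_iff.1 (hAt ▸ hAle)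
    rw [h]; exact le_top
  rcases eq_or_ne B ⊤ with hBt | hBt
  · have h : (∫⁻ a, (f a + g a) ^ r ∂μ) ^ (1/r) = ⊤ := top_le_iff.1 (hBt ▸ hBle)
    rw [h]; exact le_top
  -- main case
  have hABne0 : A + B ≠ 0 := by simp [hA0, hB0]
  have hABnet : A + B ≠ ⊤ := by simp [hAt, hBt]
  set w₁ := A / (A + B) with hw₁
  set w₂ := B / (A + B) with hw₂
  have hw : w₁ + w₂ = 1 := by
    rw [hw₁, hw₂, ENNReal.div_add_div_same, ENNReal.div_self hABne0 hABnet]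
  have hw₁0 : w₁ ≠ 0 := by simp [hw₁, hA0, hABnet]
  have hw₂0 : w₂ ≠ 0 := by simp [hw₂, hB0, hABnet]
  have hw₁t : w₁ ≠ ⊤ := by
    have h1 : w₁ ≤ 1 := hw ▸ le_self_add
    exact ne_top_of_le_ne_top ENNReal.one_ne_top h1
  have hw₂t : w₂ ≠ ⊤ := by
    have h1 : w₂ ≤ 1 := hw ▸ le_add_self
    exact ne_top_of_le_ne_top ENNReal.one_ne_top h1
  -- pointwise concavity
  have hpt : ∀ a : X, w₁ ^ (1 - r) * f a ^ r + w₂ ^ (1 - r) * g a ^ r ≤ (f a + g a) ^ r := by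
    intro a
    have h := conc2 hr0 hr1 w₁ w₂ (f a / w₁) (g a / w₂) hw
    rw [ENNReal.mul_div_cancel hw₁0 hw₁t, ENNReal.mul_div_cancel hw₂0 hw₂t] at h
    have e : ∀ (w z : ℝ≥0∞), w ≠ 0 → w ≠ ⊤ → w * (z / w) ^ r = w ^ (1 - r) * z ^ r := by
      intro w z h0 ht
      rw [ENNReal.div_rpow_of_nonneg _ _ hr0.le, ENNReal.div_eq_inv_mul, ← mul_assoc,
        ← ENNReal.rpow_neg, show (1:ℝ) - r = 1 + -r by ring, ENNReal.rpow_add _ _ h0 ht,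
        ENNReal.rpow_one]
    rwa [e _ _ hw₁0 hw₁t, e _ _ hw₂0 hw₂t] at h
  -- integrate
  have hint : w₁ ^ (1 - r) * (∫⁻ a, f a ^ r ∂μ) + w₂ ^ (1 - r) * (∫⁻ a, g a ^ r ∂μ)
      ≤ ∫⁻ a, (f a + g a) ^ r ∂μ := by
    calc w₁ ^ (1 - r) * (∫⁻ a, f a ^ r ∂μ) + w₂ ^ (1 - r) * (∫⁻ a, g a ^ r ∂μ)
        = ∫⁻ a, w₁ ^ (1 - r) * f a ^ r + w₂ ^ (1 - r) * g a ^ r ∂μ := by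
          rw [lintegral_add_left' ((hf.pow_const r).const_mul _),
            lintegral_const_mul'' _ (hf.pow_const r), lintegral_const_mul'' _ (hg.pow_const r)]
      _ ≤ ∫⁻ a, (f a + g a) ^ r ∂μ := lintegral_mono hpt
  -- compute LHS of hint
  have hiA : (∫⁻ a, f a ^ r ∂μ) = A ^ r := by
    rw [hA, ← ENNReal.rpow_mul, one_div_mul_cancel hr0.ne', ENNReal.rpow_one]
  have hiB : (∫⁻ a, g a ^ r ∂μ) = B ^ r := by
    rw [hB, ← ENNReal.rpow_mul, one_div_mul_cancel hr0.ne', ENNReal.rpow_one]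
  have halg : w₁ ^ (1 - r) * A ^ r + w₂ ^ (1 - r) * B ^ r = (A + B) ^ r := by
    have eterm : ∀ C : ℝ≥0∞, C ≠ 0 → C ≠ ⊤ →
        (C / (A + B)) ^ (1 - r) * C ^ r = C * ((A + B) ^ (1 - r))⁻¹ := by
      intro C h0 ht
      rw [ENNReal.div_rpow_of_nonneg _ _ (by linarith : (0:ℝ) ≤ 1 - r), div_eq_mul_inv,
        mul_right_comm, ← ENNReal.rpow_add _ _ h0 ht, show (1:ℝ) - r + r = 1 by ring,
        ENNReal.rpow_one]
    rw [hw₁, hw₂, eterm A hA0 hAt, eterm B hB0 hBt, ← add_mul]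
    have h2 : (A + B) * ((A + B) ^ (1 - r))⁻¹ = (A + B) ^ (1:ℝ) * (A + B) ^ (-(1 - r)) := by
      rw [ENNReal.rpow_one, ENNReal.rpow_neg]
    rw [h2, ← ENNReal.rpow_add _ _ hABne0 hABnet, show (1:ℝ) + -(1 - r) = r by ring]
  rw [hiA, hiB, halg] at hint
  calc A + B = ((A + B) ^ r) ^ (1/r) := by
        rw [← ENNReal.rpow_mul, mul_one_div_cancel hr0.ne', ENNReal.rpow_one]
    _ ≤ (∫⁻ a, (f a + g a) ^ r ∂μ) ^ (1/r) := ENNReal.rpow_le_rpow hint h1r.le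



/-- **Uniform convexity of `L_p`, `1 < p ≤ 2` (Ball–Carlen–Lieb).**
For all `x, y ∈ L_p`: `‖x‖_p² + (p-1)‖y‖_p² ≤ (‖x+y‖_p² + ‖x-y‖_p²)/2`. -/
theorem stmt1 {X : Type*} {m0 : MeasurableSpace X} (μ : Measure X)
    (p : ℝ) (hp : 1 < p) (hp2 : p ≤ 2) (x y : X → ℝ)
    (hx : MemLp x (ENNReal.ofReal p) μ) (hy : MemLp y (ENNReal.ofReal p) μ) :
    (eLpNorm x (ENNReal.ofReal p) μ).toReal ^ 2
        + (p - 1) * (eLpNorm y (ENNReal.ofReal p) μ).toReal ^ 2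
      ≤ ((eLpNorm (x + y) (ENNReal.ofReal p) μ).toReal ^ 2
          + (eLpNorm (x - y) (ENNReal.ofReal p) μ).toReal ^ 2) / 2 := by
  have hp0 : (0:ℝ) < p := by linarith
  set q := ENNReal.ofReal p with hqdef
  have hq0 : q ≠ 0 := (ENNReal.ofReal_pos.2 hp0).ne'
  have hqt : q ≠ ⊤ := ENNReal.ofReal_ne_top
  have htr : q.toReal = p := ENNReal.toReal_ofReal hp0.le
  set c := ENNReal.ofReal (p - 1) with hcdef
  have hr0 : (0:ℝ) < p / 2 := by linarith
  have hr1 : p / 2 ≤ 1 := by linarith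
  have hE : ∀ f : X → ℝ, eLpNorm f q μ = (∫⁻ a, (‖f a‖₊ : ℝ≥0∞) ^ p ∂μ) ^ (1/p) := by
    intro f
    rw [eLpNorm_eq_lintegral_rpow_enorm_toReal hq0 hqt, htr]; rfl
  -- AEMeasurability
  have hmx : AEMeasurable (fun a => (‖x a‖₊ : ℝ≥0∞)) μ :=
    hx.aestronglyMeasurable.aemeasurable.nnnorm.coe_nnreal_ennreal
  have hmy : AEMeasurable (fun a => (‖y a‖₊ : ℝ≥0∞)) μ :=
    hy.aestronglyMeasurable.aemeasurable.nnnorm.coe_nnreal_ennreal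
  have hmxy : AEMeasurable (fun a => (‖(x + y) a‖₊ : ℝ≥0∞)) μ :=
    (hx.add hy).aestronglyMeasurable.aemeasurable.nnnorm.coe_nnreal_ennreal
  have hmxy' : AEMeasurable (fun a => (‖(x - y) a‖₊ : ℝ≥0∞)) μ :=
    (hx.sub hy).aestronglyMeasurable.aemeasurable.nnnorm.coe_nnreal_ennreal
  -- step 1 : reverse Minkowski
  have step1 := rev_minkowski (f := fun a => (‖x a‖₊ : ℝ≥0∞) ^ (2:ℝ))
    (g := fun a => c * (‖y a‖₊ : ℝ≥0∞) ^ (2:ℝ))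
    (hmx.pow_const (2:ℝ)) ((hmy.pow_const (2:ℝ)).const_mul c) hr0 hr1
  have e2p : (2:ℝ) * (p/2) = p := by ring
  have efx : ∀ a : X, ((‖x a‖₊ : ℝ≥0∞) ^ (2:ℝ)) ^ (p/2) = (‖x a‖₊ : ℝ≥0∞) ^ p := by
    intro a; rw [← ENNReal.rpow_mul, e2p]
  have efy : ∀ a : X, (c * (‖y a‖₊ : ℝ≥0∞) ^ (2:ℝ)) ^ (p/2)
      = c ^ (p/2) * (‖y a‖₊ : ℝ≥0∞) ^ p := by
    intro a
    rw [ENNReal.mul_rpow_of_nonneg _ _ hr0.le, ← ENNReal.rpow_mul, e2p]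
  simp only [efx, efy] at step1
  rw [lintegral_const_mul'' _ (hmy.pow_const p)] at step1
  rw [ENNReal.mul_rpow_of_nonneg _ _ (by positivity : (0:ℝ) ≤ 1/(p/2)),
    ← ENNReal.rpow_mul c, mul_one_div_cancel hr0.ne', ENNReal.rpow_one] at step1
  -- step 2 : pointwise two-point inequality
  have hpt : ∀ a : X, ((‖x a‖₊ : ℝ≥0∞) ^ (2:ℝ) + c * (‖y a‖₊ : ℝ≥0∞) ^ (2:ℝ)) ^ (p/2)
      ≤ ((‖(x + y) a‖₊ : ℝ≥0∞) ^ p + (‖(x - y) a‖₊ : ℝ≥0∞) ^ p) / 2 := by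
    intro a
    have hA := two_point hp hp2 (x a) (y a)
    have en : ∀ r : ℝ, (‖r‖₊ : ℝ≥0∞) = ENNReal.ofReal |r| := Real.enorm_eq_ofReal_abs
    have esq : ∀ r : ℝ, (‖r‖₊ : ℝ≥0∞) ^ (2:ℝ) = ENNReal.ofReal (r ^ 2) := by
      intro r
      rw [en r, ENNReal.ofReal_rpow_of_nonneg (abs_nonneg r) (by norm_num)]
      congr 1
      rw [show (2:ℝ) = ((2:ℕ):ℝ) by norm_num, Real.rpow_natCast, sq_abs]
    rw [esq, esq, hcdef, ← ENNReal.ofReal_mul (by linarith), ← ENNReal.ofReal_add (by positivity)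
      (by nlinarith [sq_nonneg (y a)]),
      ENNReal.ofReal_rpow_of_nonneg (by nlinarith [sq_nonneg (x a), sq_nonneg (y a)]) hr0.le]
    have eabs : ∀ f : X → ℝ, (‖f a‖₊ : ℝ≥0∞) ^ p = ENNReal.ofReal (|f a| ^ p) := by
      intro f
      rw [en, ENNReal.ofReal_rpow_of_nonneg (abs_nonneg _) hp0.le]
    rw [eabs (x + y), eabs (x - y), ← ENNReal.ofReal_add (by positivity) (by positivity)]
    have h2 : ((2:ℝ≥0∞)) = ENNReal.ofReal (2:ℝ) := by norm_num
    rw [h2, ← ENNReal.ofReal_div_of_pos (by norm_num)]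
    apply ENNReal.ofReal_le_ofReal
    simpa [Pi.add_apply, Pi.sub_apply] using hA
  -- step 3 : integrate pointwise bound
  have step2 : (∫⁻ a, ((‖x a‖₊ : ℝ≥0∞) ^ (2:ℝ) + c * (‖y a‖₊ : ℝ≥0∞) ^ (2:ℝ)) ^ (p/2) ∂μ)
      ≤ ((∫⁻ a, (‖(x + y) a‖₊ : ℝ≥0∞) ^ p ∂μ) + ∫⁻ a, (‖(x - y) a‖₊ : ℝ≥0∞) ^ p ∂μ) / 2 := by
    calc (∫⁻ a, ((‖x a‖₊ : ℝ≥0∞) ^ (2:ℝ) + c * (‖y a‖₊ : ℝ≥0∞) ^ (2:ℝ)) ^ (p/2) ∂μ)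
        ≤ ∫⁻ a, ((‖(x + y) a‖₊ : ℝ≥0∞) ^ p + (‖(x - y) a‖₊ : ℝ≥0∞) ^ p) / 2 ∂μ :=
          lintegral_mono hpt
      _ = ((∫⁻ a, (‖(x + y) a‖₊ : ℝ≥0∞) ^ p ∂μ) + ∫⁻ a, (‖(x - y) a‖₊ : ℝ≥0∞) ^ p ∂μ) / 2 := by
          simp_rw [div_eq_mul_inv]
          rw [lintegral_mul_const'' _ (f := fun a => (‖(x + y) a‖₊ : ℝ≥0∞) ^ p + (‖(x - y) a‖₊ : ℝ≥0∞) ^ p)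
              ((hmxy.pow_const p).add (hmxy'.pow_const p)),
            lintegral_add_left' (hmxy.pow_const p)]
  -- combine steps 1-3
  set U := ∫⁻ a, (‖(x + y) a‖₊ : ℝ≥0∞) ^ p ∂μ with hU
  set V := ∫⁻ a, (‖(x - y) a‖₊ : ℝ≥0∞) ^ p ∂μ with hV
  have step3 : (∫⁻ a, (‖x a‖₊ : ℝ≥0∞) ^ p ∂μ) ^ (1/(p/2))
      + c * (∫⁻ a, (‖y a‖₊ : ℝ≥0∞) ^ p ∂μ) ^ (1/(p/2)) ≤ ((U + V) / 2) ^ (1/(p/2)) :=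
    le_trans step1 (ENNReal.rpow_le_rpow step2 (by positivity))
  -- step 4 : power mean inequality
  have hs1 : (1:ℝ) ≤ 1/(p/2) := by
    rw [le_div_iff₀ hr0]; linarith
  have step4 : ((U + V) / 2) ^ (1/(p/2)) ≤ (U ^ (1/(p/2)) + V ^ (1/(p/2))) / 2 := by
    have h := ENNReal.rpow_arith_mean_le_arith_mean2_rpow (1/2) (1/2) U V
      (ENNReal.add_halves 1) hs1
    have h12 : ∀ w : ℝ≥0∞, w / 2 = 1/2 * w := fun w => by
      rw [div_eq_mul_inv, one_div, mul_comm]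
    calc ((U + V) / 2) ^ (1/(p/2))
        = (1/2 * U + 1/2 * V) ^ (1/(p/2)) := by
          rw [ENNReal.add_div, h12 U, h12 V]
      _ ≤ 1/2 * U ^ (1/(p/2)) + 1/2 * V ^ (1/(p/2)) := h
      _ = (U ^ (1/(p/2)) + V ^ (1/(p/2))) / 2 := by
          rw [ENNReal.add_div, h12 (U ^ (1/(p/2))), h12 (V ^ (1/(p/2)))]
  have main : (eLpNorm x q μ) ^ (2:ℝ) + c * (eLpNorm y q μ) ^ (2:ℝ)
      ≤ ((eLpNorm (x + y) q μ) ^ (2:ℝ) + (eLpNorm (x - y) q μ) ^ (2:ℝ)) / 2 := by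
    have eE : ∀ f : X → ℝ, (eLpNorm f q μ) ^ (2:ℝ)
        = (∫⁻ a, (‖f a‖₊ : ℝ≥0∞) ^ p ∂μ) ^ (1/(p/2)) := by
      intro f
      rw [hE f, ← ENNReal.rpow_mul]
      congr 1
      field_simp
    rw [eE x, eE y, eE (x + y), eE (x - y)]
    exact le_trans step3 step4
  -- step 5 : back to reals
  have hfin : ∀ (f : X → ℝ), MemLp f q μ → (eLpNorm f q μ) ^ (2:ℝ) ≠ ⊤ := by
    intro f hf
    exact ENNReal.rpow_ne_top_of_nonneg (by norm_num) hf.eLpNorm_ne_top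
  have ht2 : ∀ f : X → ℝ, (eLpNorm f q μ).toReal ^ 2 = ((eLpNorm f q μ) ^ (2:ℝ)).toReal := by
    intro f
    rw [← ENNReal.toReal_rpow]
    norm_num
  rw [ht2 x, ht2 y, ht2 (x + y), ht2 (x - y)]
  have hc : p - 1 = c.toReal := (ENNReal.toReal_ofReal (by linarith)).symm
  rw [hc, ← ENNReal.toReal_mul]
  rw [← ENNReal.toReal_add (hfin x hx) (ENNReal.mul_ne_top ENNReal.ofReal_ne_top
    (hfin y hy))]
  have hRfin : ((eLpNorm (x + y) q μ) ^ (2:ℝ) + (eLpNorm (x - y) q μ) ^ (2:ℝ)) / 2 ≠ ⊤ := by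
    apply ne_of_lt
    apply ENNReal.div_lt_top
    · exact ENNReal.add_ne_top.2 ⟨hfin _ (hx.add hy), hfin _ (hx.sub hy)⟩
    · norm_num
  have := ENNReal.toReal_mono hRfin main
  refine le_trans this (le_of_eq ?_)
  rw [ENNReal.toReal_div, ENNReal.toReal_add (hfin _ (hx.add hy)) (hfin _ (hx.sub hy))]
  norm_num

end BCLMain
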